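/- Dual-norm bound for the defeaturing residual: under the error representation ∫_Ω ∇e·∇v = ∫_γ d_γ v for all v ∈ H¹_{0,Γ_D}(Ω), and assuming that for every w ∈ H^{1/2}_{00}(γ) the harmonic extension u_w ∈ H¹(Ω) with boundary values w* (zero-extension of w) satisfies |u_w|_{H¹(Ω)} ≲ ‖w‖_{H^{1/2}_{00}(γ)}, one has ‖d_γ‖_{H^{−1/2}_{00}(γ)} ≲ |e|_{H¹(Ω)}. -/
import Mathlib

open MeasureTheory Set

noncomputable section

/-- Dual-norm bound for the defeaturing residual: under the (Cauchy–Schwarz'd) error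
representation `∫_γ d_γ v ≤ |e|_{H¹(Ω)} |v|_{H¹(Ω)}` for all test functions `v ∈ H¹_{0,Γ_D}(Ω)`
(predicate `T`), and assuming that every `w ∈ H^{1/2}_{00}(γ)` admits a (harmonic) extension
`u_w` in the test space agreeing with `w` on `γ` and satisfying
`|u_w|_{H¹(Ω)} ≲ ‖w‖_{H^{1/2}_{00}(γ)}`, one obtains the dual norm bound
`‖d_γ‖_{H^{−1/2}_{00}(γ)} ≲ |e|_{H¹(Ω)}`, expressed through the duality pairing. -/
theorem residual_dual_norm_bound
    {X : Type*} [MeasurableSpace X] (ν : Measure X)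
    (γ : Set X) (hγ : MeasurableSet γ)
    (d : X → ℝ)
    (T : (X → ℝ) → Prop)                -- test space H¹_{0,Γ_D}(Ω)
    (H1semi : (X → ℝ) → ℝ)              -- H¹(Ω) seminorm
    (H00 : (X → ℝ) → ℝ)                 -- H^{1/2}_{00}(γ) norm
    (hH00 : ∀ w, 0 ≤ H00 w)
    (eH1 : ℝ) (heH1 : 0 ≤ eH1)          -- |e|_{H¹(Ω)}
    (Cext : ℝ) (hCext : 0 < Cext)
    -- error representation with Cauchy–Schwarz: ∫_γ d v = ∫_Ω ∇e·∇v ≤ |e|₁ |v|₁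
    (hrep : ∀ v, T v → ∫ x in γ, d x * v x ∂ν ≤ eH1 * H1semi v)
    -- harmonic extension with continuous dependence on the data
    (hext : ∀ w : X → ℝ, ∃ uw, T uw ∧ (∀ x ∈ γ, uw x = w x) ∧
      H1semi uw ≤ Cext * H00 w)
    -- the pairing only sees the values on γ
    (hpair : ∀ w uw : X → ℝ, (∀ x ∈ γ, uw x = w x) →
      ∫ x in γ, d x * w x ∂ν = ∫ x in γ, d x * uw x ∂ν) :
    ∀ w : X → ℝ, ∫ x in γ, d x * w x ∂ν ≤ Cext * eH1 * H00 w := by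
  intro w
  obtain ⟨uw, hT, hagree, hbound⟩ := hext w
  rw [hpair w uw hagree]
  calc ∫ x in γ, d x * uw x ∂ν ≤ eH1 * H1semi uw := hrep uw hT
    _ ≤ eH1 * (Cext * H00 w) := by
        exact mul_le_mul_of_nonneg_left hbound heH1
    _ = Cext * eH1 * H00 w := by ring
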